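/- Let G be a Hermitian matrix over ℂ indexed by a finite nonempty type, and let G⁺ be its stoquastic, i.e. the real symmetric matrix with (G⁺)ᵢᵢ = Gᵢᵢ (which is real) and (G⁺)ᵢⱼ = |Gᵢⱼ| for i ≠ j. Then λ(G⁺) ≥ λ(G), where λ denotes the largest eigenvalue; equivalently, the gap negativity η′ = λ(G⁺) − λ(G) is nonnegative. -/

import Mathlib

open Matrix Finset
open scoped ComplexOrder

/-- The largest eigenvalue of a Hermitian matrix. -/
noncomputable def maxEig {𝕜 : Type*} [RCLike 𝕜] {n : Type*} [Fintype n] [DecidableEq n]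
    {A : Matrix n n 𝕜} (hA : A.IsHermitian) : ℝ := ⨆ i, hA.eigenvalues i


/-- The stoquastic of a complex (Hermitian) matrix: the real matrix keeping the (real)
diagonal entries and replacing each off-diagonal entry by its absolute value. -/
noncomputable def stoqC {n : Type*} [DecidableEq n] (A : Matrix n n ℂ) : Matrix n n ℝ :=
  fun i j => if i = j then (A i j).re else ‖A i j‖

lemma stoqC_isHermitian {n : Type*} [Fintype n] [DecidableEq n] {A : Matrix n n ℂ}
    (hA : A.IsHermitian) : (stoqC A).IsHermitian := by
  ext i j
  by_cases h : i = j
  · subst h; simp [stoqC, Matrix.conjTranspose_apply]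
  · have h1 : star (A j i) = A i j := hA.apply i j
    simp only [Matrix.conjTranspose_apply, stoqC, h, Ne.symm h, if_false, star_trivial]
    rw [← h1]
    simp


lemma rayleigh_le_maxEig {𝕜 : Type*} [RCLike 𝕜] {n : Type*} [Fintype n] [DecidableEq n]
    [Nonempty n] {A : Matrix n n 𝕜} (hA : A.IsHermitian) (x : n → 𝕜)
    (hx : ∑ i, ‖x i‖ ^ 2 = 1) :
    RCLike.re (dotProduct (star x) (A *ᵥ x)) ≤ maxEig hA := by
  set μ := maxEig hA with hμdef
  have hμ : ∀ i, hA.eigenvalues i ≤ μ := fun i =>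
    le_ciSup (Set.Finite.bddAbove (Set.finite_range _)) i
  set U : Matrix n n 𝕜 := (hA.eigenvectorUnitary : Matrix n n 𝕜) with hUdef
  have key : U * diagonal (fun i => ((μ - hA.eigenvalues i : ℝ) : 𝕜)) * Uᴴ
      = (μ : 𝕜) • (1 : Matrix n n 𝕜) - A := by
    have hU : U * Uᴴ = 1 := by
      simpa [hUdef, star_eq_conjTranspose] using
        (Matrix.mem_unitaryGroup_iff).mp hA.eigenvectorUnitary.2
    have hdiag : diagonal (fun i => ((μ - hA.eigenvalues i : ℝ) : 𝕜))
        = diagonal (fun _ => (μ : 𝕜)) - diagonal (RCLike.ofReal ∘ hA.eigenvalues) := by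
      ext i j
      by_cases h : i = j <;> simp [h, Matrix.diagonal, Matrix.sub_apply]
    rw [hdiag, Matrix.mul_sub, Matrix.sub_mul]
    congr 1
    · rw [← Matrix.smul_one_eq_diagonal, Matrix.mul_smul, Matrix.mul_one, Matrix.smul_mul, hU]
    · conv_rhs => rw [hA.spectral_theorem]
      rfl
  have hpsd : Matrix.PosSemidef ((μ : 𝕜) • (1 : Matrix n n 𝕜) - A) := by
    rw [← key]
    exact Matrix.PosSemidef.mul_mul_conjTranspose_same
      (Matrix.PosSemidef.diagonal (fun i => (RCLike.ofReal_nonneg).2 (sub_nonneg.2 (hμ i)))) U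
  have h0 := hpsd.dotProduct_mulVec_nonneg x
  have h0re : 0 ≤ RCLike.re (dotProduct (star x) (((μ : 𝕜) • (1 : Matrix n n 𝕜) - A) *ᵥ x)) := by
    exact (RCLike.nonneg_iff.mp h0).1
  have hsplit : dotProduct (star x) (((μ : 𝕜) • (1 : Matrix n n 𝕜) - A) *ᵥ x)
      = (μ : 𝕜) * dotProduct (star x) x - dotProduct (star x) (A *ᵥ x) := by
    rw [Matrix.sub_mulVec, dotProduct_sub, Matrix.smul_mulVec, Matrix.one_mulVec,
      dotProduct_smul, smul_eq_mul]
  rw [hsplit, map_sub] at h0re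
  have hnorm : RCLike.re ((μ : 𝕜) * dotProduct (star x) x) = μ := by
    have : dotProduct (star x) x = ((∑ i, ‖x i‖ ^ 2 : ℝ) : 𝕜) := by
      simp [dotProduct, RCLike.conj_mul]
    rw [this, hx]
    simp [← RCLike.ofReal_mul]
  rw [hnorm] at h0re
  linarith

/-- **Nonnegativity of the gap negativity.** For a Hermitian matrix `G` over ℂ, the largest
eigenvalue of its stoquastic `G⁺` is at least the largest eigenvalue of `G`:
the gap negativity `η′ = λ(G⁺) − λ(G)` is nonnegative. -/
theorem gapNegativity_nonneg {n : Type*} [Fintype n] [DecidableEq n] [Nonempty n]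
    {G : Matrix n n ℂ} (hG : G.IsHermitian) :
    maxEig hG ≤ maxEig (stoqC_isHermitian hG) := by
  obtain ⟨i₀, hi₀⟩ := exists_eq_ciSup_of_finite (f := hG.eigenvalues)
  set v : n → ℂ := ⇑(hG.eigenvectorBasis i₀) with hv
  have hunit : ∑ i, ‖v i‖ ^ 2 = 1 := by
    have h1 : ‖hG.eigenvectorBasis i₀‖ = 1 := hG.eigenvectorBasis.orthonormal.1 i₀
    rw [EuclideanSpace.norm_eq] at h1
    have h2 : ∑ i, ‖hG.eigenvectorBasis i₀ i‖ ^ 2 = 1 := by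
      have := congrArg (· ^ 2) h1
      simpa [Real.sq_sqrt (Finset.sum_nonneg fun i _ => sq_nonneg _)] using this
    simpa [hv] using h2
  set w : n → ℝ := fun i => ‖v i‖ with hwdef
  have hw : ∑ i, ‖w i‖ ^ 2 = 1 := by
    simpa [hwdef, abs_of_nonneg, norm_nonneg] using hunit
  have h1 : maxEig hG = RCLike.re (dotProduct (star v) (G *ᵥ v)) := by
    rw [maxEig, ← hi₀]
    exact hG.eigenvalues_eq i₀
  have h2 : RCLike.re (dotProduct (star v) (G *ᵥ v))
      ≤ RCLike.re (dotProduct (star w) ((stoqC G) *ᵥ w)) := by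
    have hL : RCLike.re (dotProduct (star v) (G *ᵥ v))
        = ∑ i, ∑ j, (starRingEnd ℂ (v i) * (G i j * v j)).re := by
      simp only [dotProduct, mulVec, dotProduct, Pi.star_apply, RCLike.star_def,
        Finset.mul_sum, RCLike.re_to_complex]
      rw [Complex.re_sum]
      exact Finset.sum_congr rfl fun i _ => Complex.re_sum _ _
    have hR : RCLike.re (dotProduct (star w) ((stoqC G) *ᵥ w))
        = ∑ i, ∑ j, w i * (stoqC G i j * w j) := by
      simp [dotProduct, mulVec, Finset.mul_sum]
    rw [hL, hR]
    refine Finset.sum_le_sum fun i _ => Finset.sum_le_sum fun j _ => ?_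
    rcases eq_or_ne i j with rfl | hij
    · have hGr : G i i = ((G i i).re : ℂ) :=
        (Complex.conj_eq_iff_re.mp (hG.apply i i)).symm
      have heq : starRingEnd ℂ (v i) * (G i i * v i)
          = (((G i i).re * Complex.normSq (v i) : ℝ) : ℂ) := by
        conv_lhs => rw [hGr]
        rw [mul_left_comm, mul_comm (starRingEnd ℂ (v i)), Complex.mul_conj]
        push_cast
        ring
      rw [heq, Complex.ofReal_re]
      simp only [stoqC, if_pos rfl, hwdef, ← Complex.sq_norm]
      ring_nf
      rw [if_pos trivial, mul_comm]


    · calc (starRingEnd ℂ (v i) * (G i j * v j)).re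
          ≤ ‖starRingEnd ℂ (v i) * (G i j * v j)‖ := Complex.re_le_norm _
        _ = w i * (stoqC G i j * w j) := by
            simp [stoqC, hij, _root_.map_mul, hwdef]
  have h3 := rayleigh_le_maxEig (stoqC_isHermitian hG) w hw
  calc maxEig hG = RCLike.re (dotProduct (star v) (G *ᵥ v)) := h1
    _ ≤ RCLike.re (dotProduct (star w) ((stoqC G) *ᵥ w)) := h2
    _ ≤ maxEig (stoqC_isHermitian hG) := h3
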